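/- Let S = {X_α, p^β_α, α < β < τ} be an almost continuous inverse system with skeletal bonding maps and X = a-lim S. If U = p_α⁻¹(V) for some open V ⊆ X_α, then the rank q(U) is disjoint from [α, τ). -/

import Mathlib

open Topology Order

universe u

/-- An inverse system of topological spaces indexed by the ordinals below `τ`,
with continuous surjective bonding maps. -/
structure InvSystem (τ : Ordinal.{u}) where
  X : Ordinal.{u} → Type u
  topo : ∀ α, TopologicalSpace (X α)
  p : ∀ α β, α ≤ β → X β → X α
  p_cont : ∀ α β (h : α ≤ β), Continuous (p α β h)
  p_surj : ∀ α β (h : α ≤ β), β < τ → Function.Surjective (p α β h)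
  p_id : ∀ α (x : X α), p α α le_rfl x = x
  p_comp : ∀ α β γ (h₁ : α ≤ β) (h₂ : β ≤ γ) (x : X γ),
    p α β h₁ (p β γ h₂ x) = p α γ (h₁.trans h₂) x

attribute [instance] InvSystem.topo

namespace InvSystem

variable {τ : Ordinal.{u}} (S : InvSystem τ)

/-- The inverse limit of the subsystem indexed by the ordinals below `γ`. -/
def lim (γ : Ordinal.{u}) : Set (∀ α : {o : Ordinal.{u} // o < γ}, S.X α.1) :=
  {f | ∀ (a b : {o : Ordinal.{u} // o < γ}) (h : a.1 ≤ b.1), S.p a.1 b.1 h (f b) = f a}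

/-- The canonical map from `X γ` to the inverse limit of the subsystem below `γ`. -/
def diag (γ : Ordinal.{u}) (x : S.X γ) : ↥(S.lim γ) :=
  ⟨fun a => S.p a.1 γ a.2.le x, fun a b h => S.p_comp a.1 b.1 γ h b.2.le x⟩

/-- The system is almost continuous: for every limit ordinal `γ < τ`, `X γ` embeds
densely into the inverse limit of the subsystem below `γ`, compatibly with the
projections. -/
def AlmostContinuous : Prop :=
  ∀ γ : Ordinal.{u}, γ < τ → Order.IsSuccLimit γ →
    Topology.IsEmbedding (S.diag γ) ∧ DenseRange (S.diag γ)

variable (A : Set (∀ α : {o : Ordinal.{u} // o < τ}, S.X α.1))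

/-- The `α`-th limit projection restricted to `A`. -/
def proj (α : Ordinal.{u}) (h : α < τ) : ↥A → S.X α :=
  fun x => x.1 ⟨α, h⟩

/-- `A` is the almost limit of `S`: it is a subspace of the inverse limit whose
projections are onto the `X α`. -/
def IsALim : Prop :=
  A ⊆ S.lim τ ∧ ∀ (α : Ordinal.{u}) (h : α < τ), Function.Surjective (S.proj A α h)

/-- The rank of a subset `U` of the almost limit `A`. -/
def rank (U : Set ↥A) : Set Ordinal.{u} :=
  {α | ∃ h : succ α < τ,
    (interior ((S.p α (succ α) (le_succ α) ⁻¹'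
        closure (S.proj A α ((lt_succ α).trans h) '' U)) \
      closure (S.proj A (succ α) h '' U))).Nonempty}

end InvSystem

/-- A continuous map is skeletal if the interior of the closure of the image of
every nonempty open set is nonempty. -/
def IsSkeletalMap {X Y : Type*} [TopologicalSpace X] [TopologicalSpace Y] (f : X → Y) : Prop :=
  Continuous f ∧
  ∀ U : Set X, IsOpen U → U.Nonempty → (interior (closure (f '' U))).Nonempty

/-- A continuous map is nearly open if `f(U) ⊆ Int cl f(U)` for every open `U`. -/
def IsNearlyOpenMap {X Y : Type*} [TopologicalSpace X] [TopologicalSpace Y] (f : X → Y) : Prop :=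
  ∀ U : Set X, IsOpen U → f '' U ⊆ interior (closure (f '' U))

open Order InvSystem in
/-- For an almost continuous inverse system with skeletal bonding maps and `A = a-lim S`,
if `U = p_α⁻¹(V)` for some open `V ⊆ X_α`, then the rank `q(U)` is disjoint from `[α, τ)`. -/
theorem rank_preimage_disjoint {τ : Ordinal.{u}} (S : InvSystem τ)
    (A : Set (∀ α : {o : Ordinal.{u} // o < τ}, S.X α.1))
    (hac : S.AlmostContinuous)
    (hskel : ∀ (α β : Ordinal.{u}) (h : α ≤ β), β < τ → IsSkeletalMap (S.p α β h))
    (hA : S.IsALim A)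
    (α : Ordinal.{u}) (hα : α < τ) (V : Set (S.X α)) (hV : IsOpen V) :
    ∀ β : Ordinal.{u}, α ≤ β → β ∉ S.rank A (S.proj A α hα ⁻¹' V) := by
  intro β hαβ hrank
  obtain ⟨hsβ, hne⟩ := hrank
  have hβ : β < τ := (lt_succ β).trans hsβ
  -- image of U under proj γ is the preimage of V under p α γ
  have himg : ∀ (γ : Ordinal.{u}) (hγ : γ < τ) (hαγ : α ≤ γ),
      S.proj A γ hγ '' (S.proj A α hα ⁻¹' V) = S.p α γ hαγ ⁻¹' V := by
    intro γ hγ hαγ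
    ext y
    constructor
    · rintro ⟨x, hx, rfl⟩
      have hc := hA.1 x.2 ⟨α, hα⟩ ⟨γ, hγ⟩ hαγ
      show S.p α γ hαγ (x.1 ⟨γ, hγ⟩) ∈ V
      rw [hc]; exact hx
    · intro hy
      obtain ⟨x, hx⟩ := hA.2 γ hγ y
      refine ⟨x, ?_, hx⟩
      have hc := hA.1 x.2 ⟨α, hα⟩ ⟨γ, hγ⟩ hαγ
      show x.1 ⟨α, hα⟩ ∈ V
      have hx' : x.1 ⟨γ, hγ⟩ = y := hx
      rw [← hc, hx']; exact hy
  set f := S.p β (succ β) (le_succ β) with hf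
  set W := S.p α β hαβ ⁻¹' V with hW
  have hWopen : IsOpen W := hV.preimage (S.p_cont α β hαβ)
  have h1 : S.proj A β ((lt_succ β).trans hsβ) '' (S.proj A α hα ⁻¹' V) = W :=
    himg β _ hαβ
  have h2 : S.proj A (succ β) hsβ '' (S.proj A α hα ⁻¹' V) = f ⁻¹' W := by
    rw [himg (succ β) hsβ (hαβ.trans (le_succ β))]
    ext z
    simp only [Set.mem_preimage, hW, hf, S.p_comp]
  rw [h1, h2] at hne
  set O := interior ((f ⁻¹' closure W) \ closure (f ⁻¹' W)) with hO
  have hOopen : IsOpen O := isOpen_interior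
  have hOsub : O ⊆ (f ⁻¹' closure W) \ closure (f ⁻¹' W) := interior_subset
  have hOdisj : O ∩ f ⁻¹' W = ∅ := by
    ext x
    simp only [Set.mem_inter_iff, Set.mem_empty_iff_false, iff_false, not_and]
    intro hx hxW
    exact (hOsub hx).2 (subset_closure hxW)
  obtain ⟨hfcont, hfsk⟩ := hskel β (succ β) (le_succ β) hsβ
  obtain ⟨y, hy⟩ := hfsk O hOopen hne
  have hfO : f '' O ⊆ closure W := by
    rintro _ ⟨x, hx, rfl⟩
    exact (hOsub hx).1
  have hycl : y ∈ closure W :=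
    closure_minimal hfO isClosed_closure (interior_subset hy)
  -- the open set interior (closure (f '' O)) meets W
  obtain ⟨w, hwW, hwI⟩ : (W ∩ interior (closure (f '' O))).Nonempty := by
    rcases (mem_closure_iff.mp hycl) (interior (closure (f '' O)))
      isOpen_interior hy with ⟨w, hwI, hwW⟩
    exact ⟨w, hwW, hwI⟩
  -- w ∈ closure (f '' O) and W open nbhd of w, so W meets f '' O
  have hwc : w ∈ closure (f '' O) := interior_subset hwI
  rcases (mem_closure_iff.mp hwc) W hWopen hwW with ⟨v, hvW, x, hxO, rfl⟩
  have : x ∈ O ∩ f ⁻¹' W := ⟨hxO, hvW⟩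
  rw [hOdisj] at this
  exact this
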